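/- Let n ≥ 4, k ≥ 1, φ(r) = ∑_{j=0}^{k} r^{2j+1}/(2j+1)!, and N = (2k+1)(n−1)+1. Define g(r) = (n−1)(φ(r)²φ'''(r) + (n−4)φ(r)φ'(r)φ''(r) − (n−3)φ'(r)³)/φ(r)³. Then r³ g(r) → −(n−1)(n−3) as r → 0⁺ and r³ g(r) → −(n−1)(2k+1)(2k(n−1)+n−3) as r → ∞. -/

import Mathlib

open Filter Finset


noncomputable def phi (k : ℕ) (r : ℝ) : ℝ :=
  ∑ j ∈ Finset.range (k + 1), r ^ (2 * j + 1) / (Nat.factorial (2 * j + 1) : ℝ)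

noncomputable def psi (k : ℕ) (r : ℝ) : ℝ :=
  ∑ j ∈ Finset.range (k + 1), r ^ (2 * j) / (Nat.factorial (2 * j) : ℝ)

noncomputable def chi (k : ℕ) (r : ℝ) : ℝ :=
  ∑ j ∈ Finset.range (k + 1), r ^ (2 * j) / (Nat.factorial (2 * j + 1) : ℝ)

lemma hasDerivAt_phi (k : ℕ) (r : ℝ) : HasDerivAt (phi k) (psi k r) r := by
  have h : ∀ j ∈ Finset.range (k+1),
      HasDerivAt (fun r : ℝ => r ^ (2*j+1) / (Nat.factorial (2*j+1) : ℝ))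
        (r ^ (2*j) / (Nat.factorial (2*j) : ℝ)) r := by
    intro j _
    have h2 := (hasDerivAt_pow (2*j+1) r).div_const ((Nat.factorial (2*j+1) : ℝ))
    refine h2.congr_deriv ?_
    symm
    rw [Nat.add_sub_cancel, Nat.factorial_succ]
    have h3 : ((2*j).factorial : ℝ) ≠ 0 := Nat.cast_ne_zero.mpr (Nat.factorial_ne_zero _)
    have h4 : ((2*j+1 : ℕ) : ℝ) ≠ 0 := Nat.cast_ne_zero.mpr (by omega)
    push_cast
    field_simp
  exact HasDerivAt.fun_sum h

lemma hasDerivAt_psi (k : ℕ) (r : ℝ) : HasDerivAt (psi (k+1)) (phi k r) r := by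
  have h : ∀ j ∈ Finset.range (k+2),
      HasDerivAt (fun r : ℝ => r ^ (2*j) / (Nat.factorial (2*j) : ℝ))
        (((2*j : ℕ) : ℝ) * r ^ (2*j-1) / (Nat.factorial (2*j) : ℝ)) r := by
    intro j _
    exact (hasDerivAt_pow (2*j) r).div_const _
  have H := HasDerivAt.fun_sum h
  refine H.congr_deriv ?_
  symm
  rw [Finset.sum_range_succ']
  simp only [Nat.mul_zero, Nat.cast_zero, zero_mul, zero_div, add_zero]
  refine Finset.sum_congr rfl fun j _ => ?_
  have e1 : 2*(j+1) = (2*j+1)+1 := by omega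
  rw [e1, Nat.add_sub_cancel]
  have h4 : ((2*j+1+1 : ℕ) : ℝ) ≠ 0 := Nat.cast_ne_zero.mpr (by omega)
  have e2 : ((2*j+1+1).factorial : ℝ) = ((2*j+1+1 : ℕ) : ℝ) * ((2*j+1).factorial : ℝ) := by
    rw [Nat.factorial_succ]; push_cast; ring
  rw [e2, mul_div_mul_left _ _ h4]

lemma deriv_phi (k : ℕ) : deriv (phi k) = psi k :=
  funext fun r => (hasDerivAt_phi k r).deriv

lemma deriv_psi (k : ℕ) : deriv (psi (k+1)) = phi k :=
  funext fun r => (hasDerivAt_psi k r).deriv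

lemma phi_zero (k : ℕ) : phi k 0 = 0 := by
  simp [phi]

lemma psi_zero (k : ℕ) : psi k 0 = 1 := by
  unfold psi
  rw [Finset.sum_eq_single 0]
  · simp
  · intro j _ hne
    rw [zero_pow (by omega), zero_div]
  · simp

lemma chi_zero (k : ℕ) : chi k 0 = 1 := by
  unfold chi
  rw [Finset.sum_eq_single 0]
  · simp
  · intro j _ hne
    rw [zero_pow (by omega), zero_div]
  · simp

lemma phi_eq (k : ℕ) (r : ℝ) : phi k r = r * chi k r := by
  unfold phi chi
  rw [Finset.mul_sum]
  refine Finset.sum_congr rfl fun j _ => ?_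
  rw [pow_succ]
  ring

lemma continuous_phi (k : ℕ) : Continuous (phi k) :=
  Differentiable.continuous (fun r => (hasDerivAt_phi k r).differentiableAt)

lemma continuous_psi (k : ℕ) : Continuous (psi k) := by
  unfold psi
  exact continuous_finset_sum _ fun j _ => (continuous_pow _).div_const _

lemma continuous_chi (k : ℕ) : Continuous (chi k) := by
  unfold chi
  exact continuous_finset_sum _ fun j _ => (continuous_pow _).div_const _

lemma phi_pos (k : ℕ) {r : ℝ} (hr : 0 < r) : 0 < phi k r := by
  unfold phi
  refine Finset.sum_pos (fun j _ => ?_) (by simp)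
  positivity

lemma tendsto_sum_div (k : ℕ) (e : ℕ → ℕ) (he : ∀ j < k, e j < e k) (c : ℕ → ℝ) :
    Filter.Tendsto (fun r : ℝ => (∑ j ∈ Finset.range (k+1), r ^ (e j) / c j) / r ^ (e k))
      Filter.atTop (nhds (1 / c k)) := by
  have h1 : ∀ᶠ r : ℝ in atTop, (∑ j ∈ Finset.range (k+1), (r ^ e j / r ^ e k) / c j)
      = (∑ j ∈ Finset.range (k+1), r ^ e j / c j) / r ^ e k := by
    filter_upwards [eventually_gt_atTop 0] with r hr
    rw [Finset.sum_div]
    refine Finset.sum_congr rfl fun j _ => ?_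
    rw [div_div, div_div, mul_comm]
  have h2 : (1:ℝ)/c k = ∑ j ∈ Finset.range (k+1), (if j = k then 1/c k else 0) := by
    rw [Finset.sum_ite_eq' (Finset.range (k+1)) k (fun _ => 1/c k)]
    simp
  rw [h2]
  refine Tendsto.congr' h1 (tendsto_finset_sum _ fun j hj => ?_)
  rcases eq_or_lt_of_le (Nat.lt_succ_iff.mp (Finset.mem_range.mp hj)) with rfl | hlt
  · simp only [if_pos rfl]
    have hev : ∀ᶠ r : ℝ in atTop, (1:ℝ)/c j = (r ^ e j / r ^ e j)/ c j := by
      filter_upwards [eventually_ne_atTop 0] with r hr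
      rw [div_self (pow_ne_zero _ hr)]
    exact Tendsto.congr' hev tendsto_const_nhds
  · simp only [if_neg (Nat.ne_of_lt hlt)]
    simpa using (tendsto_pow_div_pow_atTop_zero (he j hlt)).div_const (c j)

/-- The bi-Laplacian `Δ²a` of `a(r) = r` on the rotationally symmetric manifold `M_k^n`. -/
noncomputable def biLap (n k : ℕ) (r : ℝ) : ℝ :=
  ((n : ℝ) - 1) *
    (phi k r ^ 2 * deriv (deriv (deriv (phi k))) r
      + ((n : ℝ) - 4) * phi k r * deriv (phi k) r * deriv (deriv (phi k)) r
      - ((n : ℝ) - 3) * (deriv (phi k) r) ^ 3) / phi k r ^ 3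

theorem stmt_6 (n k : ℕ) (hn : 4 ≤ n) (hk : 1 ≤ k) (N : ℕ)
    (hN : N = (2 * k + 1) * (n - 1) + 1) :
    Filter.Tendsto (fun r : ℝ => r ^ 3 * biLap n k r)
        (nhdsWithin 0 (Set.Ioi 0)) (nhds (-(((n : ℝ) - 1) * ((n : ℝ) - 3))))
      ∧ Filter.Tendsto (fun r : ℝ => r ^ 3 * biLap n k r)
          Filter.atTop
          (nhds (-(((n : ℝ) - 1) * (2 * (k : ℝ) + 1) *
            (2 * (k : ℝ) * ((n : ℝ) - 1) + (n : ℝ) - 3)))) := by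
  obtain ⟨m, rfl⟩ : ∃ m, k = m + 1 := ⟨k - 1, by omega⟩
  have d1 : deriv (phi (m+1)) = psi (m+1) := deriv_phi _
  have d2 : deriv (deriv (phi (m+1))) = phi m := by rw [d1, deriv_psi]
  have d3 : deriv (deriv (deriv (phi (m+1)))) = psi m := by rw [d2, deriv_phi]
  have hbil : ∀ r : ℝ, biLap n (m+1) r =
      ((n : ℝ) - 1) * (phi (m+1) r ^ 2 * psi m r
        + ((n : ℝ) - 4) * phi (m+1) r * psi (m+1) r * phi m r
        - ((n : ℝ) - 3) * (psi (m+1) r) ^ 3) / phi (m+1) r ^ 3 := by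
    intro r
    unfold biLap
    rw [d3, d2, d1]
  constructor
  · -- limit at 0+
    have heq : ∀ᶠ r in nhdsWithin (0:ℝ) (Set.Ioi 0),
        ((n : ℝ) - 1) * (phi (m+1) r ^ 2 * psi m r
          + ((n : ℝ) - 4) * phi (m+1) r * psi (m+1) r * phi m r
          - ((n : ℝ) - 3) * (psi (m+1) r) ^ 3) / (chi (m+1) r) ^ 3
        = r ^ 3 * biLap n (m+1) r := by
      filter_upwards [self_mem_nhdsWithin] with r hr
      have hr' : (0:ℝ) < r := hr
      rw [hbil r]
      have hr3 : r ^ 3 / (phi (m+1) r) ^ 3 = ((chi (m+1) r) ^ 3)⁻¹ := by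
        rw [phi_eq, mul_pow, div_mul_cancel_left₀ (pow_ne_zero 3 (ne_of_gt hr'))]
      calc ((n : ℝ) - 1) * (phi (m+1) r ^ 2 * psi m r
          + ((n : ℝ) - 4) * phi (m+1) r * psi (m+1) r * phi m r
          - ((n : ℝ) - 3) * (psi (m+1) r) ^ 3) / (chi (m+1) r) ^ 3
          = ((n : ℝ) - 1) * (phi (m+1) r ^ 2 * psi m r
            + ((n : ℝ) - 4) * phi (m+1) r * psi (m+1) r * phi m r
            - ((n : ℝ) - 3) * (psi (m+1) r) ^ 3) * ((chi (m+1) r) ^ 3)⁻¹ := by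
            rw [div_eq_mul_inv]
        _ = ((n : ℝ) - 1) * (phi (m+1) r ^ 2 * psi m r
            + ((n : ℝ) - 4) * phi (m+1) r * psi (m+1) r * phi m r
            - ((n : ℝ) - 3) * (psi (m+1) r) ^ 3) * (r ^ 3 / (phi (m+1) r) ^ 3) := by
            rw [hr3]
        _ = r ^ 3 * (((n : ℝ) - 1) * (phi (m+1) r ^ 2 * psi m r
            + ((n : ℝ) - 4) * phi (m+1) r * psi (m+1) r * phi m r
            - ((n : ℝ) - 3) * (psi (m+1) r) ^ 3) / phi (m+1) r ^ 3) := by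
            ring
    refine Tendsto.congr' heq ?_
    have c1 : Continuous (phi (m+1)) := continuous_phi _
    have c2 : Continuous (psi (m+1)) := continuous_psi _
    have c3 : Continuous (phi m) := continuous_phi _
    have c4 : Continuous (psi m) := continuous_psi _
    have c5 : Continuous (chi (m+1)) := continuous_chi _
    have cF : ContinuousAt (fun r : ℝ =>
        ((n : ℝ) - 1) * (phi (m+1) r ^ 2 * psi m r
          + ((n : ℝ) - 4) * phi (m+1) r * psi (m+1) r * phi m r
          - ((n : ℝ) - 3) * (psi (m+1) r) ^ 3) / (chi (m+1) r) ^ 3) 0 := by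
      apply ContinuousAt.div
      · exact Continuous.continuousAt (by fun_prop)
      · exact Continuous.continuousAt (by fun_prop)
      · simp [chi_zero]
    have hT := cF.tendsto.mono_left (nhdsWithin_le_nhds (s := Set.Ioi (0:ℝ)))
    convert hT using 2
    simp [phi_zero, psi_zero, chi_zero]
    ring
  · -- limit at infinity
    have tP : Tendsto (fun r : ℝ => phi (m+1) r / r ^ (2*m+3)) atTop
        (nhds (1 / ((2*m+3).factorial : ℝ))) := by
      have h := tendsto_sum_div (m+1) (fun j => 2*j+1) (fun j hj => by omega)
        (fun j => ((2*j+1).factorial : ℝ))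
      simp only [show 2*(m+1)+1 = 2*m+3 from by ring] at h
      exact h
    have tS : Tendsto (fun r : ℝ => psi (m+1) r / r ^ (2*m+2)) atTop
        (nhds (1 / ((2*m+2).factorial : ℝ))) := by
      have h := tendsto_sum_div (m+1) (fun j => 2*j) (fun j hj => by omega)
        (fun j => ((2*j).factorial : ℝ))
      simp only [show 2*(m+1) = 2*m+2 from by ring] at h
      exact h
    have tQ : Tendsto (fun r : ℝ => phi m r / r ^ (2*m+1)) atTop
        (nhds (1 / ((2*m+1).factorial : ℝ))) := by
      exact tendsto_sum_div m (fun j => 2*j+1) (fun j hj => by omega)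
        (fun j => ((2*j+1).factorial : ℝ))
    have tW : Tendsto (fun r : ℝ => psi m r / r ^ (2*m)) atTop
        (nhds (1 / ((2*m).factorial : ℝ))) := by
      exact tendsto_sum_div m (fun j => 2*j) (fun j hj => by omega)
        (fun j => ((2*j).factorial : ℝ))
    set a : ℝ := 1 / ((2*m+3).factorial : ℝ) with ha_def
    set b : ℝ := 1 / ((2*m+2).factorial : ℝ) with hb_def
    set q : ℝ := 1 / ((2*m+1).factorial : ℝ) with hq_def
    set w : ℝ := 1 / ((2*m).factorial : ℝ) with hw_def
    have ha : a ≠ 0 := by positivity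
    have hnum : Tendsto (fun r : ℝ => ((n : ℝ) - 1) *
        ((phi (m+1) r / r ^ (2*m+3)) ^ 2 * (psi m r / r ^ (2*m))
          + ((n : ℝ) - 4) * (phi (m+1) r / r ^ (2*m+3)) * (psi (m+1) r / r ^ (2*m+2))
              * (phi m r / r ^ (2*m+1))
          - ((n : ℝ) - 3) * (psi (m+1) r / r ^ (2*m+2)) ^ 3)) atTop
        (nhds (((n : ℝ) - 1) * (a ^ 2 * w + ((n : ℝ) - 4) * a * b * q
          - ((n : ℝ) - 3) * b ^ 3))) :=
      tendsto_const_nhds.mul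
        ((((tP.pow 2).mul tW).add
          (((tendsto_const_nhds.mul tP).mul tS).mul tQ)).sub
          (tendsto_const_nhds.mul (tS.pow 3)))
    have hden : Tendsto (fun r : ℝ => (phi (m+1) r / r ^ (2*m+3)) ^ 3) atTop
        (nhds (a ^ 3)) := tP.pow 3
    have hT := hnum.div hden (pow_ne_zero 3 ha)
    have heq : ∀ᶠ r in atTop, (fun r : ℝ => ((n : ℝ) - 1) *
        ((phi (m+1) r / r ^ (2*m+3)) ^ 2 * (psi m r / r ^ (2*m))
          + ((n : ℝ) - 4) * (phi (m+1) r / r ^ (2*m+3)) * (psi (m+1) r / r ^ (2*m+2))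
              * (phi m r / r ^ (2*m+1))
          - ((n : ℝ) - 3) * (psi (m+1) r / r ^ (2*m+2)) ^ 3)
        / (phi (m+1) r / r ^ (2*m+3)) ^ 3) r = r ^ 3 * biLap n (m+1) r := by
      filter_upwards [eventually_gt_atTop 0] with r hr
      rw [hbil r]
      have hP : phi (m+1) r ≠ 0 := (phi_pos _ hr).ne'
      have hrne : r ≠ 0 := hr.ne'
      have hu : r ^ (2*m) ≠ 0 := pow_ne_zero _ hrne
      simp only [pow_add]
      field_simp
    have hfinal := Tendsto.congr' heq hT
    convert hfinal using 2
    have f1 : ((2*m+1).factorial : ℝ) = (2*(m:ℝ)+1) * ((2*m).factorial : ℝ) := by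
      rw [Nat.factorial_succ]; push_cast; ring
    have f2 : ((2*m+2).factorial : ℝ) = (2*(m:ℝ)+2) * ((2*m+1).factorial : ℝ) := by
      rw [show 2*m+2 = (2*m+1)+1 from by ring, Nat.factorial_succ]; push_cast; ring
    have f3 : ((2*m+3).factorial : ℝ) = (2*(m:ℝ)+3) * ((2*m+2).factorial : ℝ) := by
      rw [show 2*m+3 = (2*m+2)+1 from by ring, Nat.factorial_succ]; push_cast; ring
    have t0 : ((2*m).factorial : ℝ) ≠ 0 := Nat.cast_ne_zero.mpr (Nat.factorial_ne_zero _)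
    have p1 : (2*(m:ℝ)+1) ≠ 0 := by positivity
    have p2 : (2*(m:ℝ)+2) ≠ 0 := by positivity
    have p3 : (2*(m:ℝ)+3) ≠ 0 := by positivity
    rw [ha_def, hb_def, hq_def, hw_def, f3, f2, f1]
    push_cast
    field_simp
    ring
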